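/- For any finite orthonormal set {ψ_1,…,ψ_s} of product states in ℂ^m ⊗ ℂ^n with s < mn, the operator ρ̄ = (1/(mn−s))(I − Σ_{i=1}^s |ψ_i⟩⟨ψ_i|) satisfies: ρ̄ is positive semidefinite with trace 1, and its partial transpose (I ⊗ T)ρ̄ is also positive semidefinite. -/

import Mathlib

open scoped ComplexOrder
open Matrix

lemma complement_psd {ι : Type*} [Fintype ι] [DecidableEq ι] {s : ℕ}
    (φ : Fin s → ι → ℂ)
    (hunit : ∀ i, ∑ p, (starRingEnd ℂ) (φ i p) * φ i p = 1)
    (horth : ∀ i j, i ≠ j → ∑ p, (starRingEnd ℂ) (φ i p) * φ j p = 0) :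
    (1 - ∑ i, vecMulVec (φ i) (star (φ i))).PosSemidef := by
  set v : Fin s → EuclideanSpace ℂ ι := fun i => (WithLp.equiv 2 (ι → ℂ)).symm (φ i) with hvdef
  have hv : Orthonormal ℂ v := by
    rw [orthonormal_iff_ite]
    intro i j
    by_cases h : i = j
    · subst h
      rw [← hunit i]
      simp [hvdef, PiLp.inner_apply, RCLike.inner_apply, mul_comm, -inner_self_eq_norm_sq_to_K]
    · simpa [hvdef, PiLp.inner_apply, RCLike.inner_apply, h, mul_comm] using horth i j h
  rw [posSemidef_iff_dotProduct_mulVec]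
  constructor
  · refine Matrix.IsHermitian.sub isHermitian_one ?_
    show _ = _
    ext p q
    simp [conjTranspose_apply, Matrix.sum_apply, vecMulVec_apply, mul_comm]
  · intro x
    have key := hv.sum_inner_products_le ((WithLp.equiv 2 (ι → ℂ)).symm x) (s := Finset.univ)
    set x' : EuclideanSpace ℂ ι := (WithLp.equiv 2 (ι → ℂ)).symm x with hx'
    have hform : star x ⬝ᵥ ((1 - ∑ i, vecMulVec (φ i) (star (φ i))) *ᵥ x)
        = ((‖x'‖ : ℂ)) ^ 2 - ∑ i, ((‖(inner ℂ (v i) x' : ℂ)‖ : ℂ)) ^ 2 := by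
    -- star x ⬝ᵥ (1 *ᵥ x) = ⟪x',x'⟫ and each rank-one term is conj c * c
      have hsum : (∑ i, vecMulVec (φ i) (star (φ i))) *ᵥ x
          = ∑ i, vecMulVec (φ i) (star (φ i)) *ᵥ x := by
        ext p
        simp only [mulVec, dotProduct, Finset.sum_apply, Matrix.sum_apply, Finset.sum_mul]
        rw [Finset.sum_comm]
      have hdot : star x ⬝ᵥ ∑ i, vecMulVec (φ i) (star (φ i)) *ᵥ x
          = ∑ i, star x ⬝ᵥ (vecMulVec (φ i) (star (φ i)) *ᵥ x) := by
        simp only [dotProduct, Finset.sum_apply, Finset.mul_sum]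
        rw [Finset.sum_comm]
      rw [sub_mulVec, dotProduct_sub, hsum, hdot, one_mulVec]
      congr 1
      · have : (inner ℂ x' x' : ℂ) = ((‖x'‖ : ℂ)) ^ 2 := inner_self_eq_norm_sq_to_K x'
        rw [← this]
        simp [PiLp.inner_apply, RCLike.inner_apply, dotProduct, hx', mul_comm, -inner_self_eq_norm_sq_to_K]
      · refine Finset.sum_congr rfl fun i _ => ?_
        have hc : (inner ℂ (v i) x' : ℂ) = ∑ q, (starRingEnd ℂ) (φ i q) * x q := by
          simp [hvdef, hx', PiLp.inner_apply, RCLike.inner_apply, mul_comm]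
        have hnorm : ((‖(inner ℂ (v i) x' : ℂ)‖ : ℂ)) ^ 2
            = (starRingEnd ℂ) (inner ℂ (v i) x' : ℂ) * (inner ℂ (v i) x' : ℂ) := by
          rw [← Complex.normSq_eq_conj_mul_self, Complex.normSq_eq_norm_sq]
          push_cast; ring
        rw [hnorm, hc]
        simp only [dotProduct, mulVec, vecMulVec_apply, dotProduct]
        rw [map_sum]
        simp only [_root_.map_mul, Complex.conj_conj, Pi.star_apply, RCLike.star_def]
        rw [Finset.sum_mul]
        refine Finset.sum_congr rfl fun p _ => ?_
        rw [Finset.mul_sum, Finset.mul_sum]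
        refine Finset.sum_congr rfl fun q _ => ?_
        ring
    rw [hform]
    have : ((‖x'‖ : ℂ)) ^ 2 - ∑ i, ((‖(inner ℂ (v i) x' : ℂ)‖ : ℂ)) ^ 2
        = ((‖x'‖ ^ 2 - ∑ i, ‖(inner ℂ (v i) x' : ℂ)‖ ^ 2 : ℝ) : ℂ) := by
      push_cast; ring
    rw [this, Complex.zero_le_real]
    simpa using sub_nonneg.mpr key

lemma psd_smul_nonneg {ι : Type*} [Fintype ι] {M : Matrix ι ι ℂ} (hM : M.PosSemidef)
    {c : ℝ} (hc : 0 ≤ c) : ((c : ℂ) • M).PosSemidef := by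
  rw [posSemidef_iff_dotProduct_mulVec]
  constructor
  · show ((c : ℂ) • M)ᴴ = _
    have : ((c : ℂ) • M)ᴴ = (starRingEnd ℂ) (c : ℂ) • Mᴴ := by
      ext p q; simp [conjTranspose_apply]
    rw [this, hM.1, Complex.conj_ofReal]
  · intro x
    rw [smul_mulVec, dotProduct_smul, smul_eq_mul]
    exact mul_nonneg (by rw [Complex.zero_le_real]; exact hc) (hM.dotProduct_mulVec_nonneg x)


/-- For an orthonormal set of s < mn product states in ℂ^m ⊗ ℂ^n, the
normalized projector onto the complement is a PPT state: it is positive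
semidefinite with trace 1, and its partial transpose is positive semidefinite. -/
theorem stmt_17 (m n s : ℕ) (hs : s < m * n)
    (ψ : Fin s → (Fin m × Fin n → ℂ))
    (hprod : ∀ i, ∃ (u : Fin m → ℂ) (v : Fin n → ℂ), ψ i = fun p => u p.1 * v p.2)
    (hunit : ∀ i, ∑ p, (starRingEnd ℂ) (ψ i p) * ψ i p = 1)
    (horth : ∀ i j, i ≠ j → ∑ p, (starRingEnd ℂ) (ψ i p) * ψ j p = 0)
    (ρ : Matrix (Fin m × Fin n) (Fin m × Fin n) ℂ)
    (hρ : ρ = (((m * n - s : ℕ) : ℂ))⁻¹ •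
      (1 - ∑ i, Matrix.vecMulVec (ψ i) (star (ψ i)))) :
    ρ.PosSemidef ∧ ρ.trace = 1 ∧
    Matrix.PosSemidef (Matrix.of fun p q : Fin m × Fin n => ρ (p.1, q.2) (q.1, p.2)) := by
  have hNpos : 0 < m * n - s := Nat.sub_pos_of_lt hs
  have hcoe : (((m * n - s : ℕ) : ℂ))⁻¹ = (((((m * n - s : ℕ) : ℝ))⁻¹ : ℝ) : ℂ) := by
    push_cast; ring
  have hcnn : (0:ℝ) ≤ ((((m * n - s : ℕ) : ℝ))⁻¹ : ℝ) := by positivity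
  have hP := complement_psd ψ hunit horth
  refine ⟨by rw [hρ, hcoe]; exact psd_smul_nonneg hP hcnn, ?_, ?_⟩
  · rw [hρ]
    rw [Matrix.trace_smul]
    have htr : (1 - ∑ i, Matrix.vecMulVec (ψ i) (star (ψ i))).trace
        = ((m * n : ℕ) : ℂ) - (s : ℂ) := by
      rw [Matrix.trace_sub, Matrix.trace_sum, Matrix.trace_one]
      have : ∀ i, (Matrix.vecMulVec (ψ i) (star (ψ i))).trace = 1 := by
        intro i
        rw [Matrix.trace]
        simp only [Matrix.diag_apply, Matrix.vecMulVec_apply, Pi.star_apply, RCLike.star_def]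
        rw [← hunit i]
        exact Finset.sum_congr rfl fun p _ => by ring
      simp [this, Fintype.card_prod]
    rw [htr, smul_eq_mul]
    have h1 : ((m * n - s : ℕ) : ℂ) = ((m * n : ℕ) : ℂ) - (s : ℂ) := by
      rw [Nat.cast_sub hs.le]
    have h2 : ((m * n - s : ℕ) : ℂ) ≠ 0 := Nat.cast_ne_zero.mpr hNpos.ne'
    rw [← h1, inv_mul_cancel₀ h2]
  · choose u v huv using hprod
    set φ : Fin s → (Fin m × Fin n → ℂ) :=
      fun i p => u i p.1 * (starRingEnd ℂ) (v i p.2) with hφ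
    have hunit' : ∀ i, ∑ p, (starRingEnd ℂ) (φ i p) * φ i p = 1 := by
      intro i
      rw [← hunit i]
      refine Finset.sum_congr rfl fun p _ => ?_
      rw [huv i]
      simp only [hφ, _root_.map_mul, Complex.conj_conj]
      ring
    have horth' : ∀ i j, i ≠ j → ∑ p, (starRingEnd ℂ) (φ i p) * φ j p = 0 := by
      intro i j hij
      have hfac : ∀ (a : Fin m → ℂ) (b : Fin n → ℂ) ,
          ∑ p : Fin m × Fin n, a p.1 * b p.2 = (∑ x, a x) * (∑ y, b y) := by
        intro a b
        rw [Fintype.sum_prod_type, Finset.sum_mul_sum]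
      have h0 : (∑ x, (starRingEnd ℂ) (u i x) * u j x) *
          (∑ y, (starRingEnd ℂ) (v i y) * v j y) = 0 := by
        rw [← hfac]
        rw [← horth i j hij]
        refine Finset.sum_congr rfl fun p _ => ?_
        rw [huv i, huv j]
        simp only [_root_.map_mul]
        ring
      have hsplit : ∑ p, (starRingEnd ℂ) (φ i p) * φ j p
          = (∑ x, (starRingEnd ℂ) (u i x) * u j x) *
            (starRingEnd ℂ) (∑ y, (starRingEnd ℂ) (v i y) * v j y) := by
        rw [map_sum,
          ← hfac (fun x => (starRingEnd ℂ) (u i x) * u j x)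
            (fun y => (starRingEnd ℂ) ((starRingEnd ℂ) (v i y) * v j y))]
        refine Finset.sum_congr rfl fun p _ => ?_
        simp only [hφ, _root_.map_mul, Complex.conj_conj]
        ring
      rcases mul_eq_zero.mp h0 with h | h
      · rw [hsplit, h, zero_mul]
      · rw [hsplit, h, map_zero, mul_zero]
    have hPT := complement_psd φ hunit' horth'
    have heq : (Matrix.of fun p q : Fin m × Fin n => ρ (p.1, q.2) (q.1, p.2))
        = (((m * n - s : ℕ) : ℂ))⁻¹ • (1 - ∑ i, Matrix.vecMulVec (φ i) (star (φ i))) := by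
      ext p q
      rw [hρ]
      simp only [Matrix.of_apply, Matrix.smul_apply, Matrix.sub_apply, Matrix.sum_apply,
        Matrix.one_apply, Matrix.vecMulVec_apply, Pi.star_apply, RCLike.star_def]
      congr 1
      congr 1
      · have : ((p.1, q.2) = (q.1, p.2)) ↔ (p = q) := by
          rw [Prod.ext_iff, Prod.ext_iff]
          exact ⟨fun h => ⟨h.1, h.2.symm⟩, fun h => ⟨h.1, h.2.symm⟩⟩
        simp [this]
      · refine Finset.sum_congr rfl fun i _ => ?_
        rw [huv i]
        simp only [hφ, _root_.map_mul, Complex.conj_conj]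
        ring
    rw [heq, hcoe]
    exact psd_smul_nonneg hPT hcnn
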